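/- Let B ⊆ Z_{≥0}^{m_1+...+m_n} be a set of vectors of equal modulus t satisfying the generalized bi-exchange property, and let u ∈ Z_{≥0}^{m_1+...+m_n} be arbitrary. Define B:u to be the set of minimal elements of {(a − u)^+ : a ∈ B}, where (v)^+ denotes the componentwise positive part max(v,0). If all elements of B:u have the same modulus, then B:u satisfies the generalized bi-exchange property. -/
import Mathlib


open Finset

/-- Index set: pairs (i,j) with 1 ≤ i ≤ n, 1 ≤ j ≤ m i. -/
abbrev Idx (n : ℕ) (m : Fin n → ℕ) := (i : Fin n) × Fin (m i)

/-- The vector a − e_{ij} + e_{il}. -/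
def exchStep {n : ℕ} {m : Fin n → ℕ} (a : Idx n m → ℕ) (i : Fin n) (j l : Fin (m i)) :
    Idx n m → ℕ :=
  fun p => if p = ⟨i, j⟩ then a p - 1 else if p = ⟨i, l⟩ then a p + 1 else a p

/-- The generalized bi-exchange property. -/
def BiExchange {n : ℕ} {m : Fin n → ℕ} (B : Set (Idx n m → ℕ)) : Prop :=
  ∀ a ∈ B, ∀ b ∈ B, ∀ (i : Fin n) (j : Fin (m i)),
    b ⟨i, j⟩ < a ⟨i, j⟩ →
      ∃ l : Fin (m i), a ⟨i, l⟩ < b ⟨i, l⟩ ∧ exchStep a i j l ∈ B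

lemma eq_of_le_of_sum_le {κ : Type*} [Fintype κ] {f g : κ → ℕ} (h : g ≤ f)
    (hs : ∑ p, f p ≤ ∑ p, g p) : g = f := by
  by_contra hne
  have hlt : ∑ p, g p < ∑ p, f p := by
    apply Finset.sum_lt_sum (fun i _ => h i)
    obtain ⟨i, hi⟩ := Function.ne_iff.mp hne
    exact ⟨i, Finset.mem_univ i, lt_of_le_of_ne (h i) hi⟩
  omega

lemma exists_min_le {κ : Type*} [Fintype κ] (S : Set (κ → ℕ)) {e : κ → ℕ} (he : e ∈ S) :
    ∃ f ∈ S, f ≤ e ∧ ∀ g ∈ S, g ≤ f → g = f := by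
  set T : Set ℕ := {k | ∃ g, g ∈ S ∧ g ≤ e ∧ (∑ p, g p) = k} with hT
  have hTne : (∑ p, e p) ∈ T := ⟨e, he, le_refl e, rfl⟩
  obtain ⟨g, hgS, hge, hgsum⟩ := Nat.sInf_mem ⟨_, hTne⟩
  refine ⟨g, hgS, hge, fun h hhS hhg => ?_⟩
  have hmem : (∑ p, h p) ∈ T := ⟨h, hhS, le_trans hhg hge, rfl⟩
  have hle := Nat.sInf_le hmem
  exact eq_of_le_of_sum_le hhg (by omega)

/-- colon by a monomial. B:u is the set of minimal elements of
{(a − u)⁺ : a ∈ B} (componentwise truncated subtraction). If all its elements have the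
same modulus, it satisfies the generalized bi-exchange property. -/
theorem stmt12 {n : ℕ} {m : Fin n → ℕ} (B : Set (Idx n m → ℕ)) (t : ℕ)
    (hmod : ∀ a ∈ B, (∑ p, a p) = t) (hex : BiExchange B)
    (u : Idx n m → ℕ)
    (S : Set (Idx n m → ℕ)) (hS : S = {c | ∃ a ∈ B, c = fun p => a p - u p})
    (Bu : Set (Idx n m → ℕ)) (hBu : Bu = {c ∈ S | ∀ d ∈ S, d ≤ c → d = c})
    (hsame : ∃ s : ℕ, ∀ c ∈ Bu, (∑ p, c p) = s) :
    BiExchange Bu := by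
  obtain ⟨s, hs⟩ := hsame
  intro c hc d hd i j hlt
  have hcs : (∑ p, c p) = s := hs c hc
  rw [hBu] at hc hd
  obtain ⟨hcS, hcmin⟩ := hc
  obtain ⟨hdS, hdmin⟩ := hd
  obtain ⟨a, haB, hca⟩ := hS ▸ hcS
  obtain ⟨b, hbB, hdb⟩ := hS ▸ hdS
  have hcp : ∀ p, c p = a p - u p := fun p => congrFun hca p
  have hdp : ∀ p, d p = b p - u p := fun p => congrFun hdb p
  -- b ⟨i,j⟩ < a ⟨i,j⟩
  have hij1 : c ⟨i, j⟩ = a ⟨i, j⟩ - u ⟨i, j⟩ := hcp _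
  have hij2 : d ⟨i, j⟩ = b ⟨i, j⟩ - u ⟨i, j⟩ := hdp _
  have hblt : b ⟨i, j⟩ < a ⟨i, j⟩ := by omega
  obtain ⟨l, hl1, hl2⟩ := hex a haB b hbB i j hblt
  have hjl : j ≠ l := by
    intro h; subst h; omega
  have hne : (⟨i, j⟩ : Idx n m) ≠ ⟨i, l⟩ := by
    intro h
    exact hjl (eq_of_heq (Sigma.mk.inj_iff.mp h).2)
  set c' : Idx n m → ℕ := fun p => exchStep a i j l p - u p with hc'
  have hc'S : c' ∈ S := by rw [hS]; exact ⟨exchStep a i j l, hl2, rfl⟩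
  by_cases hcase : a ⟨i, l⟩ < u ⟨i, l⟩
  · -- contradiction with minimality of c
    exfalso
    have hle : c' ≤ c := by
      intro p
      by_cases h1 : p = ⟨i, j⟩
      · subst h1
        simp [hc', exchStep, hne]
        omega
      · by_cases h2 : p = ⟨i, l⟩
        · subst h2
          simp [hc', exchStep, h1]
          have := hcp (⟨i, l⟩ : Idx n m)
          omega
        · simp [hc', exchStep, h1, h2]
          have := hcp p; omega
    have heq := congrFun (hcmin c' hc'S hle) ⟨i, j⟩
    simp [hc', exchStep, hne] at heq
    omega
  · push_neg at hcase
    have hil1 : c ⟨i, l⟩ = a ⟨i, l⟩ - u ⟨i, l⟩ := hcp _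
    have hil2 : d ⟨i, l⟩ = b ⟨i, l⟩ - u ⟨i, l⟩ := hdp _
    have hc'eq : c' = exchStep c i j l := by
      funext p
      by_cases h1 : p = ⟨i, j⟩
      · subst h1
        simp [hc', exchStep, hne]
        omega
      · by_cases h2 : p = ⟨i, l⟩
        · subst h2
          simp [hc', exchStep, h1]
          omega
        · simp [hc', exchStep, h1, h2]
          have := hcp p; omega
    -- sum of exchStep c equals sum of c
    have hkey : ∀ p : Idx n m,
        exchStep c i j l p + (if p = ⟨i, j⟩ then 1 else 0)
          = c p + (if p = ⟨i, l⟩ then 1 else 0) := by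
      intro p
      by_cases h1 : p = ⟨i, j⟩
      · subst h1
        simp [exchStep, hne]
        omega
      · by_cases h2 : p = ⟨i, l⟩
        · subst h2
          simp [exchStep, h1]
        · simp [exchStep, h1, h2]
    have hsum : (∑ p, exchStep c i j l p) = ∑ p, c p := by
      have h1 := Finset.sum_congr rfl (fun p (_ : p ∈ (univ : Finset (Idx n m))) => hkey p)
      rw [Finset.sum_add_distrib, Finset.sum_add_distrib] at h1
      rw [Finset.sum_ite_eq' univ (⟨i, j⟩ : Idx n m) (fun _ => 1),
        Finset.sum_ite_eq' univ (⟨i, l⟩ : Idx n m) (fun _ => 1)] at h1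
      simp at h1
      omega
    refine ⟨l, by omega, ?_⟩
    rw [hBu]
    refine ⟨hc'eq ▸ hc'S, fun e heS hle => ?_⟩
    obtain ⟨f, hfS, hfe, hfmin⟩ := exists_min_le S heS
    have hfBu : f ∈ Bu := by rw [hBu]; exact ⟨hfS, hfmin⟩
    have hfs : (∑ p, f p) = s := hs f hfBu
    have hfc' : f = exchStep c i j l :=
      eq_of_le_of_sum_le (le_trans hfe hle) (by omega)
    exact le_antisymm hle (hfc' ▸ hfe)
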